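/- If G is a bilaterally-complete tripartite graph, then the minimum cardinality of a 𝒯-transversal of G equals the maximum cardinality of a packing of triangles in G, i.e. τ△(G) = ν△(G). -/

import Mathlib

open SimpleGraph

variable {V : Type*}

/-- The set of edges of a triangle, given by its vertex set `t`:
all unordered pairs of distinct vertices of `t`. -/
def triangleEdges (t : Finset V) : Set (Sym2 V) :=
  {e | ∃ u ∈ t, ∃ v ∈ t, u ≠ v ∧ e = s(u, v)}

/-- `E'` is a `𝒯`-transversal of `G`: a set of edges of `G` meeting every triangle of `G`. -/
def IsTriTransversal (G : SimpleGraph V) (E' : Set (Sym2 V)) : Prop :=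
  E' ⊆ G.edgeSet ∧ ∀ t : Finset V, G.IsNClique 3 t → ∃ e ∈ triangleEdges t, e ∈ E'

/-- `τ△ G`: the minimum cardinality of a `𝒯`-transversal of `G`. -/
noncomputable def triTransversalNum (G : SimpleGraph V) : ℕ :=
  sInf {n | ∃ E' : Set (Sym2 V), IsTriTransversal G E' ∧ E'.ncard = n}

/-- `P` is a packing in `G`: a set of triangles of `G` that are pairwise edge-disjoint. -/
def IsTriPacking (G : SimpleGraph V) (P : Set (Finset V)) : Prop :=
  (∀ t ∈ P, G.IsNClique 3 t) ∧
    P.Pairwise fun t t' => Disjoint (triangleEdges t) (triangleEdges t')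

/-- `ν△ G`: the maximum cardinality of a packing of triangles in `G`. -/
noncomputable def triPackingNum (G : SimpleGraph V) : ℕ :=
  sSup {n | ∃ P : Set (Finset V), IsTriPacking G P ∧ P.ncard = n}

/-- The set of edges of `G` with one endpoint in `M` and the other in `W`. -/
def edgesBetween (G : SimpleGraph V) (M W : Set V) : Set (Sym2 V) :=
  {e | e ∈ G.edgeSet ∧ ∃ u ∈ M, ∃ w ∈ W, e = s(u, w)}

/-- `G` is tripartite with parts `A`, `B`, `C`: the vertex set is partitioned into
the three independent sets `A`, `B`, `C`. -/
def IsTripartition (G : SimpleGraph V) (A B C : Set V) : Prop :=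
  A ∪ B ∪ C = Set.univ ∧ Disjoint A B ∧ Disjoint A C ∧ Disjoint B C ∧
    (∀ u ∈ A, ∀ v ∈ A, ¬G.Adj u v) ∧ (∀ u ∈ B, ∀ v ∈ B, ¬G.Adj u v) ∧
    (∀ u ∈ C, ∀ v ∈ C, ¬G.Adj u v)

/-- The side `G[X ∪ Y]` of a tripartite graph is a complete bipartite graph. -/
def CompleteSide (G : SimpleGraph V) (X Y : Set V) : Prop :=
  ∀ x ∈ X, ∀ y ∈ Y, G.Adj x y

/-- `W` is a vertex cover of the subgraph edge-induced by the edge set `Y`. -/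
def CoversEdges (W : Set V) (Y : Set (Sym2 V)) : Prop :=
  ∀ e ∈ Y, ∃ v ∈ W, v ∈ e

/-- `M` is a matching consisting of edges from the edge set `F`:
the edges of `M` are pairwise vertex-disjoint. -/
def IsMatchingIn (F : Set (Sym2 V)) (M : Set (Sym2 V)) : Prop :=
  M ⊆ F ∧ M.Pairwise fun e f => ∀ v, v ∈ e → v ∉ f


namespace TriPack
open Finset

variable {α : Type*} [DecidableEq α]

/-- degree in first coordinate -/
def degB (E : Finset (α × α)) (b : α) : ℕ := (E.filter (fun e => e.1 = b)).card
/-- degree in second coordinate -/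
def degC (E : Finset (α × α)) (c : α) : ℕ := (E.filter (fun e => e.2 = c)).card

noncomputable def fval (k : ℕ) (E : Finset (α × α)) (X Y : Finset α) : ℕ :=
  k * X.card + k * Y.card + (E.filter (fun e => e.1 ∉ X ∧ e.2 ∉ Y)).card

noncomputable def mu (k : ℕ) (E : Finset (α × α)) : ℕ :=
  sInf {n | ∃ X Y : Finset α, fval k E X Y = n}

lemma mu_le_fval (k : ℕ) (E : Finset (α × α)) (X Y : Finset α) :
    mu k E ≤ fval k E X Y := Nat.sInf_le ⟨X, Y, rfl⟩

lemma exists_mu_min (k : ℕ) (E : Finset (α × α)) :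
    ∃ X Y : Finset α, fval k E X Y = mu k E := by
  have h : ({n | ∃ X Y : Finset α, fval k E X Y = n}).Nonempty := ⟨_, ∅, ∅, rfl⟩
  exact Nat.sInf_mem h

lemma fval_submod (k : ℕ) (E : Finset (α × α)) (X X' Y Y' : Finset α) :
    fval k E (X ∪ X') (Y ∩ Y') + fval k E (X ∩ X') (Y ∪ Y')
      ≤ fval k E X Y + fval k E X' Y' := by
  classical
  have hX : (X ∪ X').card + (X ∩ X').card = X.card + X'.card :=
    Finset.card_union_add_card_inter X X'
  have hY : (Y ∩ Y').card + (Y ∪ Y').card = Y.card + Y'.card := by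
    rw [add_comm]; exact Finset.card_union_add_card_inter Y Y'
  have hE : (E.filter (fun e => e.1 ∉ X ∪ X' ∧ e.2 ∉ Y ∩ Y')).card
      + (E.filter (fun e => e.1 ∉ X ∩ X' ∧ e.2 ∉ Y ∪ Y')).card
      ≤ (E.filter (fun e => e.1 ∉ X ∧ e.2 ∉ Y)).card
      + (E.filter (fun e => e.1 ∉ X' ∧ e.2 ∉ Y')).card := by
    rw [Finset.card_filter, Finset.card_filter, Finset.card_filter, Finset.card_filter,
      ← Finset.sum_add_distrib, ← Finset.sum_add_distrib]
    apply Finset.sum_le_sum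
    intro e _
    by_cases h1 : e.1 ∈ X <;> by_cases h2 : e.1 ∈ X' <;>
      by_cases h3 : e.2 ∈ Y <;> by_cases h4 : e.2 ∈ Y' <;>
      simp [Finset.mem_union, Finset.mem_inter, h1, h2, h3, h4]
  have hX' : k * (X ∪ X').card + k * (X ∩ X').card = k * X.card + k * X'.card := by
    rw [← Nat.mul_add, hX, Nat.mul_add]
  have hY' : k * (Y ∩ Y').card + k * (Y ∪ Y').card = k * Y.card + k * Y'.card := by
    rw [← Nat.mul_add, hY, Nat.mul_add]
  unfold fval
  omega

lemma min_lattice (k : ℕ) (E : Finset (α × α)) {X X' Y Y' : Finset α}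
    (h : fval k E X Y = mu k E) (h' : fval k E X' Y' = mu k E) :
    fval k E (X ∪ X') (Y ∩ Y') = mu k E ∧ fval k E (X ∩ X') (Y ∪ Y') = mu k E := by
  have hs := fval_submod k E X X' Y Y'
  have h1 := mu_le_fval k E (X ∪ X') (Y ∩ Y')
  have h2 := mu_le_fval k E (X ∩ X') (Y ∪ Y')
  omega

lemma filter_erase_eq (E : Finset (α × α)) (e : α × α) {X Y : Finset α}
    (hcov : e.1 ∈ X ∨ e.2 ∈ Y) :
    (E.erase e).filter (fun f => f.1 ∉ X ∧ f.2 ∉ Y)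
      = E.filter (fun f => f.1 ∉ X ∧ f.2 ∉ Y) := by
  ext f
  simp only [Finset.mem_filter, Finset.mem_erase]
  constructor
  · rintro ⟨⟨-, hf⟩, h⟩; exact ⟨hf, h⟩
  · rintro ⟨hf, h⟩
    refine ⟨⟨?_, hf⟩, h⟩
    rintro rfl
    tauto

lemma fval_erase_le (k : ℕ) (E : Finset (α × α)) (e : α × α) (X Y : Finset α) :
    fval k E X Y ≤ fval k (E.erase e) X Y + 1 := by
  unfold fval
  have : (E.filter (fun f => f.1 ∉ X ∧ f.2 ∉ Y)).card
      ≤ ((E.erase e).filter (fun f => f.1 ∉ X ∧ f.2 ∉ Y)).card + 1 := by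
    have h1 : E.filter (fun f => f.1 ∉ X ∧ f.2 ∉ Y)
        ⊆ insert e ((E.erase e).filter (fun f => f.1 ∉ X ∧ f.2 ∉ Y)) := by
      intro f hf
      simp only [Finset.mem_filter] at hf
      rcases eq_or_ne f e with rfl | hne
      · exact Finset.mem_insert_self _ _
      · exact Finset.mem_insert_of_mem (by simp [Finset.mem_filter, Finset.mem_erase, hne, hf.1, hf.2])
    calc (E.filter (fun f => f.1 ∉ X ∧ f.2 ∉ Y)).card
        ≤ (insert e ((E.erase e).filter (fun f => f.1 ∉ X ∧ f.2 ∉ Y))).card :=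
          Finset.card_le_card h1
      _ ≤ _ := Finset.card_insert_le _ _
  omega

/-- The deletion claim: if some first-coordinate vertex has degree > k,
some edge at it can be deleted without decreasing `mu`. -/
lemma exists_erase_b (k : ℕ) (E : Finset (α × α)) (b : α) (hb : k + 1 ≤ degB E b) :
    ∃ e ∈ E, e.1 = b ∧ mu k E ≤ mu k (E.erase e) := by
  classical
  by_contra hcon
  push_neg at hcon
  -- for each u in the neighborhood, a minimizer avoiding b and u
  have key : ∀ u : α, (b, u) ∈ E → ∃ X Y : Finset α,
      fval k E X Y = mu k E ∧ b ∉ X ∧ u ∉ Y := by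
    intro u hu
    have hlt := hcon (b, u) hu rfl
    obtain ⟨X, Y, hXY⟩ := exists_mu_min k (E.erase (b, u))
    by_cases hcov : (b, u).1 ∈ X ∨ (b, u).2 ∈ Y
    · exfalso
      have : fval k E X Y = fval k (E.erase (b, u)) X Y := by
        unfold fval; rw [filter_erase_eq E (b, u) hcov]
      have := mu_le_fval k E X Y
      omega
    · push_neg at hcov
      refine ⟨X, Y, ?_, hcov.1, hcov.2⟩
      have h1 := fval_erase_le k E (b, u) X Y
      have h2 := mu_le_fval k E X Y
      omega
  -- neighborhood of b
  set N : Finset α := (E.filter (fun e => e.1 = b)).image (fun e => e.2) with hN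
  have hNmem : ∀ u ∈ N, (b, u) ∈ E := by
    intro u hu
    simp only [hN, Finset.mem_image, Finset.mem_filter] at hu
    obtain ⟨e, ⟨he, he1⟩, he2⟩ := hu
    rcases e with ⟨x, y⟩
    dsimp at he1 he2
    subst he1; subst he2
    exact he
  have hNne : N.Nonempty := by
    have : (E.filter (fun e => e.1 = b)).Nonempty := by
      rw [← Finset.card_pos]; unfold degB at hb; omega
    exact this.image _
  -- combine minimizers over all of N
  have comb : ∀ T : Finset α, T ⊆ N → ∃ X Y : Finset α,
      fval k E X Y = mu k E ∧ b ∉ X ∧ ∀ u ∈ T, u ∉ Y := by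
    intro T
    induction T using Finset.induction_on with
    | empty =>
      intro _
      obtain ⟨u₀, hu₀⟩ := hNne
      obtain ⟨X, Y, h1, h2, _⟩ := key u₀ (hNmem u₀ hu₀)
      exact ⟨X, Y, h1, h2, by simp⟩
    | insert u T hnotmem ih =>
      intro hsub
      have hT : T ⊆ N := fun x hx => hsub (Finset.mem_insert_of_mem hx)
      obtain ⟨X, Y, h1, h2, h3⟩ := ih hT
      have huN : u ∈ N := hsub (Finset.mem_insert_self u T)
      obtain ⟨X', Y', h1', h2', h3'⟩ := key u (hNmem u huN)
      obtain ⟨hjoin, -⟩ := min_lattice k E h1 h1'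
      refine ⟨X ∪ X', Y ∩ Y', hjoin, ?_, ?_⟩
      · simp [h2, h2']
      · intro w hw
        rcases Finset.mem_insert.mp hw with rfl | hw
        · simp [h3']
        · simp [h3 w hw]
  obtain ⟨X, Y, hmin, hbX, hNY⟩ := comb N (le_refl _)
  -- now adding b to X strictly decreases fval: contradiction
  have hsplit : (E.filter (fun f => f.1 ∉ X ∧ f.2 ∉ Y)).card
      = ((E.filter (fun f => f.1 ∉ X ∧ f.2 ∉ Y)).filter (fun f => f.1 = b)).card
        + ((E.filter (fun f => f.1 ∉ X ∧ f.2 ∉ Y)).filter (fun f => f.1 ≠ b)).card := by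
    rw [Finset.card_filter_add_card_filter_not]
  have hbedges : (E.filter (fun e => e.1 = b)) ⊆
      (E.filter (fun f => f.1 ∉ X ∧ f.2 ∉ Y)).filter (fun f => f.1 = b) := by
    intro f hf
    simp only [Finset.mem_filter] at hf ⊢
    obtain ⟨hfE, hfb⟩ := hf
    have hfN : f.2 ∈ N := by
      simp only [hN, Finset.mem_image, Finset.mem_filter]
      exact ⟨f, ⟨hfE, hfb⟩, rfl⟩
    exact ⟨⟨hfE, by rw [hfb]; exact hbX, hNY _ hfN⟩, hfb⟩
  have hcard1 : k + 1 ≤ ((E.filter (fun f => f.1 ∉ X ∧ f.2 ∉ Y)).filter (fun f => f.1 = b)).card :=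
    le_trans hb (Finset.card_le_card hbedges)
  have hfilt2 : (E.filter (fun f => f.1 ∉ insert b X ∧ f.2 ∉ Y))
      = (E.filter (fun f => f.1 ∉ X ∧ f.2 ∉ Y)).filter (fun f => f.1 ≠ b) := by
    ext f
    simp only [Finset.mem_filter, Finset.mem_insert]
    tauto
  have hXb : (insert b X).card = X.card + 1 := Finset.card_insert_of_notMem hbX
  have hfin : fval k E (insert b X) Y + 1 ≤ fval k E X Y := by
    unfold fval
    rw [hfilt2, hXb]
    have := hsplit
    nlinarith [hcard1, hsplit]
  have := mu_le_fval k E (insert b X) Y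
  omega


lemma swap_image_filter (E : Finset (α × α)) (p : α × α → Prop) [DecidablePred p] :
    (E.image Prod.swap).filter p = (E.filter (fun e => p e.swap)).image Prod.swap := by
  rw [Finset.filter_image]

omit [DecidableEq α] in
lemma swap_inj : Function.Injective (Prod.swap : α × α → α × α) :=
  fun a b h => by rcases a with ⟨x,y⟩; rcases b with ⟨u,v⟩; simpa [Prod.ext_iff, and_comm] using h

lemma fval_swap (k : ℕ) (E : Finset (α × α)) (X Y : Finset α) :
    fval k (E.image Prod.swap) Y X = fval k E X Y := by
  unfold fval
  rw [swap_image_filter, Finset.card_image_of_injective _ swap_inj]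
  simp only [Prod.fst_swap, Prod.snd_swap]
  rw [add_comm (k * Y.card) (k * X.card)]
  congr 2
  apply Finset.filter_congr
  intro e _
  tauto

lemma mu_swap (k : ℕ) (E : Finset (α × α)) : mu k (E.image Prod.swap) = mu k E := by
  apply le_antisymm
  · obtain ⟨X, Y, h⟩ := exists_mu_min k E
    rw [← h, ← fval_swap k E X Y]
    exact mu_le_fval _ _ _ _
  · obtain ⟨X, Y, h⟩ := exists_mu_min k (E.image Prod.swap)
    rw [← h, fval_swap k E Y X]
    exact mu_le_fval _ _ _ _

lemma degC_swap (E : Finset (α × α)) (c : α) : degB (E.image Prod.swap) c = degC E c := by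
  unfold degB degC
  rw [swap_image_filter, Finset.card_image_of_injective _ swap_inj]
  rfl

lemma erase_swap (E : Finset (α × α)) (e : α × α) :
    (E.image Prod.swap).erase e.swap = (E.erase e).image Prod.swap := by
  rw [← Finset.image_erase swap_inj]

lemma exists_erase_c (k : ℕ) (E : Finset (α × α)) (c : α) (hc : k + 1 ≤ degC E c) :
    ∃ e ∈ E, e.2 = c ∧ mu k E ≤ mu k (E.erase e) := by
  rw [← degC_swap] at hc
  obtain ⟨f, hf, hf1, hmu⟩ := exists_erase_b k (E.image Prod.swap) c hc
  simp only [Finset.mem_image] at hf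
  obtain ⟨e, he, rfl⟩ := hf
  refine ⟨e, he, by simpa using hf1, ?_⟩
  rwa [mu_swap, erase_swap, mu_swap] at hmu

lemma degB_mono {E F : Finset (α × α)} (h : E ⊆ F) (b : α) : degB E b ≤ degB F b :=
  Finset.card_le_card (Finset.filter_subset_filter _ h)

lemma degC_mono {E F : Finset (α × α)} (h : E ⊆ F) (c : α) : degC E c ≤ degC F c :=
  Finset.card_le_card (Finset.filter_subset_filter _ h)

/-- The deficiency form of the degree-constrained subgraph theorem. -/
theorem exists_deg_subgraph (k : ℕ) (E : Finset (α × α)) :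
    ∃ U, U ⊆ E ∧ (∀ b, degB U b ≤ k) ∧ (∀ c, degC U c ≤ k) ∧ mu k E ≤ U.card := by
  classical
  induction E using Finset.strongInduction with
  | _ E ih =>
    by_cases hall : (∀ b, degB E b ≤ k) ∧ (∀ c, degC E c ≤ k)
    · refine ⟨E, le_refl _, hall.1, hall.2, ?_⟩
      have := mu_le_fval k E ∅ ∅
      unfold fval at this
      simpa using this
    · have hdel : ∃ e ∈ E, mu k E ≤ mu k (E.erase e) := by
        rcases not_and_or.mp hall with h | h
        · push_neg at h
          obtain ⟨b, hb⟩ := h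
          obtain ⟨e, he, -, hmu⟩ := exists_erase_b k E b hb
          exact ⟨e, he, hmu⟩
        · push_neg at h
          obtain ⟨c, hc⟩ := h
          obtain ⟨e, he, -, hmu⟩ := exists_erase_c k E c hc
          exact ⟨e, he, hmu⟩
      obtain ⟨e, he, hmu⟩ := hdel
      obtain ⟨U, hU1, hU2, hU3, hU4⟩ := ih (E.erase e) (Finset.erase_ssubset he)
      exact ⟨U, hU1.trans (Finset.erase_subset _ _), hU2, hU3, le_trans hmu hU4⟩


def Adj2 (e f : α × α) : Prop := e.1 = f.1 ∨ e.2 = f.2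

def Step (D : Finset (α × α)) (e f : α × α) : Prop := f ∈ D ∧ Adj2 e f

omit [DecidableEq α] in
lemma reach_mem {D : Finset (α × α)} {e f : α × α} (h : Relation.ReflTransGen (Step D) e f)
    (he : e ∈ D) : f ∈ D := by
  induction h with
  | refl => exact he
  | tail _ hstep _ => exact hstep.1

/-- Kempe chain lemma: the `α/β`-component of `c`'s `α`-edge never touches `b`,
provided `b` misses color `true` and `c` misses color `false`. -/
lemma kempe : ∀ (n : ℕ) (D : Finset (α × α)) (colb : α × α → Bool), D.card ≤ n →
    (∀ e ∈ D, ∀ f ∈ D, e ≠ f → Adj2 e f → colb e ≠ colb f) →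
    ∀ (b c : α),
    (∀ u, (b, u) ∈ D → colb (b, u) = false) →
    (∀ w, (w, c) ∈ D → colb (w, c) = true) →
    ∀ b₁ : α, (b₁, c) ∈ D →
    ∀ f, Relation.ReflTransGen (Step D) (b₁, c) f → f.1 ≠ b := by
  intro n
  induction n with
  | zero =>
    intro D colb hcard _ b c _ _ b₁ he₀ f _
    have hD : D = ∅ := Finset.card_eq_zero.mp (Nat.le_zero.mp hcard)
    subst hD
    exact absurd he₀ (by simp)
  | succ n ih =>
    intro D colb hcard hprop b c hb hc b₁ he₀ f hreach
    have he₀col : colb (b₁, c) = true := hc b₁ he₀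
    have hbb₁ : b₁ ≠ b := by
      rintro rfl
      rw [hb c he₀] at he₀col
      exact absurd he₀col (by simp)
    -- every edge sharing the vertex c equals (b₁, c)
    have hshare2 : ∀ g ∈ D, g.2 = c → g = (b₁, c) := by
      rintro ⟨g1, g2⟩ hg hg2
      dsimp at hg2; subst hg2
      by_contra hne
      exact hprop _ hg _ he₀ hne (Or.inr rfl) (by rw [hc g1 hg, he₀col])
    by_cases hB : ∃ u, (b₁, u) ∈ D ∧ colb (b₁, u) = false
    · obtain ⟨c₁, he₁D, he₁col⟩ := hB
      have hc₁c : c₁ ≠ c := by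
        rintro rfl
        rw [hc b₁ he₁D] at he₁col
        exact absurd he₁col (by simp)
      have he₁e₀ : (b₁, c₁) ≠ (b₁, c) := by simp [hc₁c]
      -- every edge sharing the vertex b₁ is e₀ or e₁
      have hshare1 : ∀ g ∈ D, g.1 = b₁ → g = (b₁, c) ∨ g = (b₁, c₁) := by
        intro g hg hg1
        by_cases h0 : g = (b₁, c)
        · exact Or.inl h0
        by_cases h1 : g = (b₁, c₁)
        · exact Or.inr h1
        exfalso
        have ht := hprop _ hg _ he₀ h0 (Or.inl hg1)
        have hf := hprop _ hg _ he₁D h1 (Or.inl hg1)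
        rw [he₀col] at ht
        rw [he₁col] at hf
        rcases Bool.eq_false_or_eq_true (colb g) with h | h <;> simp [h] at ht hf
      by_cases hB2 : ∃ w, (w, c₁) ∈ D ∧ colb (w, c₁) = true
      · -- recurse on D minus e₀, e₁, starting from c₁'s true edge
        obtain ⟨b₂, he₂D, he₂col⟩ := hB2
        have he₂e₀ : (b₂, c₁) ≠ (b₁, c) := by simp [hc₁c]
        have he₂e₁ : (b₂, c₁) ≠ (b₁, c₁) := by
          intro h
          rw [h, he₁col] at he₂col
          exact absurd he₂col (by simp)
        set D' : Finset (α × α) := (D.erase (b₁, c)).erase (b₁, c₁) with hD'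
        have hD'sub : ∀ g ∈ D', g ∈ D := fun g hg =>
          Finset.mem_of_mem_erase (Finset.mem_of_mem_erase hg)
        have hmemD' : ∀ g ∈ D, g ≠ (b₁, c) → g ≠ (b₁, c₁) → g ∈ D' := by
          intro g hg h0 h1
          simp [hD', Finset.mem_erase, h0, h1, hg]
        have hcardD' : D'.card ≤ n := by
          have h1 : (b₁, c₁) ∈ D.erase (b₁, c) := Finset.mem_erase.mpr ⟨he₁e₀, he₁D⟩
          rw [hD', Finset.card_erase_of_mem h1, Finset.card_erase_of_mem he₀]
          omega
        have he₂D' : (b₂, c₁) ∈ D' := hmemD' _ he₂D he₂e₀ he₂e₁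
        have hc' : ∀ w, (w, c₁) ∈ D' → colb (w, c₁) = true := by
          intro w hw
          have hwD := hD'sub _ hw
          by_contra hfalse
          have : (w, c₁) ≠ (b₁, c₁) := by
            intro h; rw [h] at hw
            simp [hD', Finset.mem_erase] at hw
          exact hprop _ hwD _ he₁D this (Or.inr rfl)
            (by rw [he₁col]; simpa using hfalse)
        have IH2 := ih D' colb hcardD'
          (fun e he f hf => hprop e (hD'sub e he) f (hD'sub f hf))
          b c₁ (fun u hu => hb u (hD'sub _ hu)) hc' b₂ he₂D'
        -- the reachable set decomposes
        have hdecomp : ∀ f, Relation.ReflTransGen (Step D) (b₁, c) f →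
            (f = (b₁, c) ∨ f = (b₁, c₁)) ∨ Relation.ReflTransGen (Step D') (b₂, c₁) f := by
          intro f hf
          induction hf with
          | refl => exact Or.inl (Or.inl rfl)
          | tail hstep₁ hstep ihd =>
            rename_i f' g
            obtain ⟨hgD, hadj⟩ := hstep
            rcases ihd with (rfl | rfl) | hreach'
            · rcases hadj with h | h
              · exact Or.inl (hshare1 g hgD h.symm)
              · exact Or.inl (Or.inl (hshare2 g hgD h.symm))
            · rcases hadj with h | h
              · exact Or.inl (hshare1 g hgD h.symm)
              · -- g.2 = c₁
                rcases eq_or_ne g (b₁, c₁) with rfl | hne1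
                · exact Or.inl (Or.inr rfl)
                rcases eq_or_ne g (b₂, c₁) with rfl | hne2
                · exact Or.inr Relation.ReflTransGen.refl
                exfalso
                have hgtrue : colb g = true := by
                  by_contra hfg
                  exact hprop _ hgD _ he₁D hne1 (Or.inr h.symm)
                    (by rw [he₁col]; simpa using hfg)
                exact hprop _ hgD _ he₂D hne2 (Or.inr h.symm) (by rw [hgtrue, he₂col])
            · rcases eq_or_ne g (b₁, c) with rfl | h0
              · exact Or.inl (Or.inl rfl)
              rcases eq_or_ne g (b₁, c₁) with rfl | h1
              · exact Or.inl (Or.inr rfl)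
              exact Or.inr (hreach'.tail ⟨hmemD' g hgD h0 h1, hadj⟩)
        rcases hdecomp f hreach with (rfl | rfl) | hr
        · exact hbb₁
        · exact hbb₁
        · exact IH2 f hr
      · -- component is exactly {e₀, e₁}
        have hsingle : ∀ f, Relation.ReflTransGen (Step D) (b₁, c) f →
            f = (b₁, c) ∨ f = (b₁, c₁) := by
          intro f hf
          induction hf with
          | refl => exact Or.inl rfl
          | tail hstep₁ hstep ihd =>
            rename_i f' g
            obtain ⟨hgD, hadj⟩ := hstep
            rcases ihd with rfl | rfl
            · rcases hadj with h | h
              · exact hshare1 g hgD h.symm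
              · exact Or.inl (hshare2 g hgD h.symm)
            · rcases hadj with h | h
              · exact hshare1 g hgD h.symm
              · -- g.2 = c₁, no true edge at c₁ besides nothing
                rcases eq_or_ne g (b₁, c₁) with rfl | hne1
                · exact Or.inr rfl
                exfalso
                have hgtrue : colb g = true := by
                  by_contra hfg
                  exact hprop _ hgD _ he₁D hne1 (Or.inr h.symm)
                    (by rw [he₁col]; simpa using hfg)
                have hgeq : (g.1, c₁) = g := by
                  have h' : c₁ = g.2 := h
                  rw [h']
                exact hB2 ⟨g.1, by rwa [hgeq], by rwa [hgeq]⟩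
        rcases hsingle f hreach with rfl | rfl <;> exact hbb₁
    · -- b₁ has no false edge: component is {e₀}
      push_neg at hB
      have hsingle : ∀ f, Relation.ReflTransGen (Step D) (b₁, c) f → f = (b₁, c) := by
        intro f hf
        induction hf with
        | refl => rfl
        | tail hstep₁ hstep ihd =>
          rename_i f' g
          obtain ⟨hgD, hadj⟩ := hstep
          subst ihd
          rcases hadj with h | h
          · rcases eq_or_ne g (b₁, c) with rfl | hne
            · rfl
            exfalso
            have : colb g ≠ true := by
              rw [← he₀col]
              exact hprop _ hgD _ he₀ hne (Or.inl h.symm)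
            have hfalse : colb g = false := by simpa using this
            have hgeq : (b₁, g.2) = g := by
              have h' : b₁ = g.1 := h
              rw [h']
            have := hB g.2
            rw [hgeq] at this
            exact (this hgD) hfalse
          · exact hshare2 g hgD h.symm
      rw [hsingle f hreach]
      exact hbb₁


lemma exists_unused {k : ℕ} {s : Finset ℕ} (h : s.card < k) : ∃ a ∈ Finset.range k, a ∉ s := by
  by_contra hcon
  push_neg at hcon
  have : Finset.range k ⊆ s := hcon
  have := Finset.card_le_card this
  simp at this
  omega

lemma degB_erase (E : Finset (α × α)) (e : α × α) (he : e ∈ E) :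
    degB (E.erase e) e.1 + 1 = degB E e.1 := by
  unfold degB
  have : (E.erase e).filter (fun f => f.1 = e.1) = (E.filter (fun f => f.1 = e.1)).erase e := by
    ext f; simp only [Finset.mem_filter, Finset.mem_erase]; tauto
  rw [this, Finset.card_erase_of_mem (by simp [Finset.mem_filter, he])]
  have : 0 < (E.filter (fun f => f.1 = e.1)).card :=
    Finset.card_pos.mpr ⟨e, by simp [Finset.mem_filter, he]⟩
  omega

lemma degC_erase (E : Finset (α × α)) (e : α × α) (he : e ∈ E) :
    degC (E.erase e) e.2 + 1 = degC E e.2 := by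
  unfold degC
  have : (E.erase e).filter (fun f => f.2 = e.2) = (E.filter (fun f => f.2 = e.2)).erase e := by
    ext f; simp only [Finset.mem_filter, Finset.mem_erase]; tauto
  rw [this, Finset.card_erase_of_mem (by simp [Finset.mem_filter, he])]
  have : 0 < (E.filter (fun f => f.2 = e.2)).card :=
    Finset.card_pos.mpr ⟨e, by simp [Finset.mem_filter, he]⟩
  omega

/-- König edge-colouring: a bipartite graph with degrees at most `k`
has a proper `k`-edge-colouring. -/
theorem exists_coloring (k : ℕ) (E : Finset (α × α))
    (hbdeg : ∀ b, degB E b ≤ k) (hcdeg : ∀ c, degC E c ≤ k) :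
    ∃ col : α × α → ℕ, (∀ e ∈ E, col e < k) ∧
      (∀ e ∈ E, ∀ f ∈ E, e ≠ f → Adj2 e f → col e ≠ col f) := by
  classical
  induction E using Finset.strongInduction with
  | _ E ihE =>
  rcases Finset.eq_empty_or_nonempty E with rfl | ⟨e, he⟩
  · exact ⟨fun _ => 0, by simp, by simp⟩
  obtain ⟨b, c⟩ := e
  set E' : Finset (α × α) := E.erase (b, c) with hE'
  obtain ⟨col, hcol1, hcol2⟩ := ihE E' (Finset.erase_ssubset he)
    (fun b' => le_trans (degB_mono (Finset.erase_subset _ _) b') (hbdeg b'))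
    (fun c' => le_trans (degC_mono (Finset.erase_subset _ _) c') (hcdeg c'))
  have hdb : degB E' b + 1 ≤ k := by
    have := degB_erase E (b, c) he
    have := hbdeg b
    simp only [hE'] at *
    omega
  have hdc : degC E' c + 1 ≤ k := by
    have := degC_erase E (b, c) he
    have := hcdeg c
    simp only [hE'] at *
    omega
  set Ub : Finset ℕ := (E'.filter (fun f => f.1 = b)).image col with hUb
  set Uc : Finset ℕ := (E'.filter (fun f => f.2 = c)).image col with hUc
  have hUbcard : Ub.card < k := lt_of_le_of_lt (Finset.card_image_le)
    (by unfold degB at hdb; omega)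
  have hUccard : Uc.card < k := lt_of_le_of_lt (Finset.card_image_le)
    (by unfold degC at hdc; omega)
  obtain ⟨a, hak, haUb⟩ := exists_unused hUbcard
  obtain ⟨d, hdk, hdUc⟩ := exists_unused hUccard
  have hmemUb : ∀ f ∈ E', f.1 = b → col f ∈ Ub := by
    intro f hf hf1
    exact Finset.mem_image.mpr ⟨f, Finset.mem_filter.mpr ⟨hf, hf1⟩, rfl⟩
  have hmemUc : ∀ f ∈ E', f.2 = c → col f ∈ Uc := by
    intro f hf hf2
    exact Finset.mem_image.mpr ⟨f, Finset.mem_filter.mpr ⟨hf, hf2⟩, rfl⟩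
  have hbcE' : (b, c) ∉ E' := Finset.notMem_erase _ _
  have hextend : ∀ col' : α × α → ℕ, (∀ f ∈ E', col' f < k) →
      (∀ f ∈ E', ∀ g ∈ E', f ≠ g → Adj2 f g → col' f ≠ col' g) →
      ∀ γ, γ < k → (∀ f ∈ E', Adj2 (b, c) f → col' f ≠ γ) →
      ∃ colf : α × α → ℕ, (∀ f ∈ E, colf f < k) ∧
        (∀ f ∈ E, ∀ g ∈ E, f ≠ g → Adj2 f g → colf f ≠ colf g) := by
    intro col' h1 h2 γ hγ h3
    refine ⟨Function.update col' (b, c) γ, ?_, ?_⟩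
    · intro f hf
      rcases eq_or_ne f (b, c) with rfl | hne
      · rw [Function.update_self]; exact hγ
      · rw [Function.update_of_ne hne]
        exact h1 f (Finset.mem_erase.mpr ⟨hne, hf⟩)
    · intro f hf g hg hfg hadj
      rcases eq_or_ne f (b, c) with rfl | hnef
      · have hgE' : g ∈ E' := Finset.mem_erase.mpr ⟨fun h => hfg h.symm, hg⟩
        rw [Function.update_self, Function.update_of_ne (fun h => hfg h.symm)]
        exact fun h => (h3 g hgE' hadj) h.symm
      rcases eq_or_ne g (b, c) with rfl | hneg
      · have hfE' : f ∈ E' := Finset.mem_erase.mpr ⟨hnef, hf⟩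
        rw [Function.update_self, Function.update_of_ne hnef]
        have : Adj2 (b, c) f := by
          rcases hadj with h | h
          · exact Or.inl h.symm
          · exact Or.inr h.symm
        exact h3 f hfE' this
      · rw [Function.update_of_ne hnef, Function.update_of_ne hneg]
        exact h2 f (Finset.mem_erase.mpr ⟨hnef, hf⟩) g (Finset.mem_erase.mpr ⟨hneg, hg⟩) hfg hadj
  by_cases hnice : ∃ γ ∈ Finset.range k, γ ∉ Ub ∧ γ ∉ Uc
  · obtain ⟨γ, hγk, hγb, hγc⟩ := hnice
    refine hextend col hcol1 hcol2 γ (Finset.mem_range.mp hγk) ?_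
    intro f hf hadj
    rcases hadj with h | h
    · exact fun hcf => hγb (hcf ▸ hmemUb f hf h.symm)
    · exact fun hcf => hγc (hcf ▸ hmemUc f hf h.symm)
  · -- Kempe swap needed
    push_neg at hnice
    have haUc : a ∈ Uc := hnice a hak haUb
    have hdUb : d ∈ Ub := by
      by_contra hdUb
      exact hdUc (hnice d hdk hdUb)
    have had : a ≠ d := fun h => haUb (by rw [h]; exact hdUb)
    set D : Finset (α × α) := E'.filter (fun f => col f = a ∨ col f = d) with hD
    set colb : α × α → Bool := fun f => col f = a with hcolb
    have hDsub : ∀ f ∈ D, f ∈ E' := fun f hf => (Finset.mem_filter.mp hf).1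
    have hDcol : ∀ f ∈ D, col f = a ∨ col f = d := fun f hf => (Finset.mem_filter.mp hf).2
    have hpropD : ∀ f ∈ D, ∀ g ∈ D, f ≠ g → Adj2 f g → colb f ≠ colb g := by
      intro f hf g hg hfg hadj
      have hne := hcol2 f (hDsub f hf) g (hDsub g hg) hfg hadj
      rcases hDcol f hf with h1 | h1 <;> rcases hDcol g hg with h2 | h2 <;>
        simp [hcolb, h1, h2] at hne ⊢ <;> omega
    have hbD : ∀ u, (b, u) ∈ D → colb (b, u) = false := by
      intro u hu
      have h1 := hmemUb _ (hDsub _ hu) rfl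
      have : col (b, u) ≠ a := fun h => haUb (h ▸ h1)
      simp [hcolb, this]
    have hcD : ∀ w, (w, c) ∈ D → colb (w, c) = true := by
      intro w hw
      have h1 := hmemUc _ (hDsub _ hw) rfl
      have h2 : col (w, c) ≠ d := fun h => hdUc (h ▸ h1)
      rcases hDcol _ hw with h | h
      · simp [hcolb, h]
      · exact absurd h h2
    -- find c's a-edge
    obtain ⟨f₀, hf₀, hf₀col⟩ : ∃ f ∈ E'.filter (fun f => f.2 = c), col f = a := by
      obtain ⟨f, hf, hfc⟩ := Finset.mem_image.mp haUc
      exact ⟨f, hf, hfc⟩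
    have hf₀c : f₀.2 = c := (Finset.mem_filter.mp hf₀).2
    have hf₀E' : f₀ ∈ E' := (Finset.mem_filter.mp hf₀).1
    have hf₀D : f₀ ∈ D := Finset.mem_filter.mpr ⟨hf₀E', Or.inl hf₀col⟩
    have hf₀eq : (f₀.1, c) = f₀ := by rw [← hf₀c]
    have hkempe := kempe D.card D colb (le_refl _) hpropD b c hbD hcD f₀.1
      (by rwa [hf₀eq])
    rw [hf₀eq] at hkempe
    set Rch : α × α → Prop := fun f => Relation.ReflTransGen (Step D) f₀ f with hRch
    have hRchD : ∀ f, Rch f → f ∈ D := fun f hf => reach_mem hf hf₀D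
    classical
    set col2 : α × α → ℕ := fun f => if Rch f then (if col f = a then d else a) else col f
      with hcol2'
    have col2_nr : ∀ f, ¬ Rch f → col2 f = col f := by
      intro f hnr; simp only [hcol2']; rw [if_neg hnr]
    have col2_ra : ∀ f, Rch f → col f = a → col2 f = d := by
      intro f hr hfa; simp only [hcol2']; rw [if_pos hr, if_pos hfa]
    have col2_rd : ∀ f, Rch f → col f = d → col2 f = a := by
      intro f hr hfd; simp only [hcol2']
      rw [if_pos hr, if_neg (by rw [hfd]; exact fun h => had h.symm)]
    have hcol2val : ∀ f ∈ E', col2 f < k := by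
      intro f hf
      by_cases hr : Rch f
      · rcases hDcol f (hRchD f hr) with h | h
        · rw [col2_ra f hr h]; exact Finset.mem_range.mp hdk
        · rw [col2_rd f hr h]; exact Finset.mem_range.mp hak
      · rw [col2_nr f hr]; exact hcol1 f hf
    have hcol2prop : ∀ f ∈ E', ∀ g ∈ E', f ≠ g → Adj2 f g → col2 f ≠ col2 g := by
      intro f hf g hg hfg hadj
      have hold := hcol2 f hf g hg hfg hadj
      have hadj' : Adj2 g f := by
        rcases hadj with h | h
        · exact Or.inl h.symm
        · exact Or.inr h.symm
      by_cases hrf : Rch f <;> by_cases hrg : Rch g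
      · have h1 := hDcol f (hRchD f hrf)
        have h2 := hDcol g (hRchD g hrg)
        rcases h1 with h1 | h1 <;> rcases h2 with h2 | h2
        · rw [h1, h2] at hold; exact absurd rfl hold
        · rw [col2_ra f hrf h1, col2_rd g hrg h2]; exact fun h => had h.symm
        · rw [col2_rd f hrf h1, col2_ra g hrg h2]; exact had
        · rw [h1, h2] at hold; exact absurd rfl hold
      · have hgD : g ∉ D := fun hgD => hrg (hrf.tail ⟨hgD, hadj⟩)
        have hga : col g ≠ a := fun h => hgD (Finset.mem_filter.mpr ⟨hg, Or.inl h⟩)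
        have hgd : col g ≠ d := fun h => hgD (Finset.mem_filter.mpr ⟨hg, Or.inr h⟩)
        rw [col2_nr g hrg]
        rcases hDcol f (hRchD f hrf) with h | h
        · rw [col2_ra f hrf h]; exact fun hh => hgd hh.symm
        · rw [col2_rd f hrf h]; exact fun hh => hga hh.symm
      · have hfD : f ∉ D := fun hfD => hrf (hrg.tail ⟨hfD, hadj'⟩)
        have hfa : col f ≠ a := fun h => hfD (Finset.mem_filter.mpr ⟨hf, Or.inl h⟩)
        have hfd : col f ≠ d := fun h => hfD (Finset.mem_filter.mpr ⟨hf, Or.inr h⟩)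
        rw [col2_nr f hrf]
        rcases hDcol g (hRchD g hrg) with h | h
        · rw [col2_ra g hrg h]; exact hfd
        · rw [col2_rd g hrg h]; exact hfa
      · rw [col2_nr f hrf, col2_nr g hrg]; exact hold
    refine hextend col2 hcol2val hcol2prop a (Finset.mem_range.mp hak) ?_
    intro f hf hadj
    rcases hadj with h | h
    · -- f.1 = b : f is not reached, and col f ≠ a since a unused at b
      have hnr : ¬ Rch f := fun hr => hkempe f hr h.symm
      rw [col2_nr f hnr]
      exact fun hcf => haUb (hcf ▸ hmemUb f hf h.symm)
    · -- f.2 = c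
      by_cases hrf : Rch f
      · have h2 : col f ≠ d := fun hcf => hdUc (hcf ▸ hmemUc f hf h.symm)
        have h3 : col f = a := by
          rcases hDcol f (hRchD f hrf) with hh | hh
          · exact hh
          · exact absurd hh h2
        rw [col2_ra f hrf h3]
        exact fun hh => had hh.symm
      · rw [col2_nr f hrf]
        intro hcf
        have hfD : f ∈ D := Finset.mem_filter.mpr ⟨hf, Or.inl hcf⟩
        exact hrf (Relation.ReflTransGen.refl.tail ⟨hfD, Or.inr (hf₀c.trans h)⟩)

end TriPack

section Glue

variable {V : Type*}

lemma triangleEdges_sub [DecidableEq V] {a b c : V} {e : Sym2 V}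
    (h : e ∈ triangleEdges ({a, b, c} : Finset V)) :
    e = s(a, b) ∨ e = s(a, c) ∨ e = s(b, c) := by
  obtain ⟨u, hu, v, hv, huv, rfl⟩ := h
  simp only [Finset.mem_insert, Finset.mem_singleton] at hu hv
  rcases hu with rfl | rfl | rfl <;> rcases hv with rfl | rfl | rfl <;>
    first
      | exact absurd rfl huv
      | exact Or.inl rfl
      | exact Or.inl Sym2.eq_swap
      | exact Or.inr (Or.inl rfl)
      | exact Or.inr (Or.inl Sym2.eq_swap)
      | exact Or.inr (Or.inr rfl)
      | exact Or.inr (Or.inr Sym2.eq_swap)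

lemma triangleEdges_mem₁ [DecidableEq V] {a b c : V} (hab : a ≠ b) :
    s(a, b) ∈ triangleEdges ({a, b, c} : Finset V) :=
  ⟨a, by simp, b, by simp, hab, rfl⟩

lemma triangleEdges_mem₂ [DecidableEq V] {a b c : V} (hac : a ≠ c) :
    s(a, c) ∈ triangleEdges ({a, b, c} : Finset V) :=
  ⟨a, by simp, c, by simp, hac, rfl⟩

lemma triangleEdges_mem₃ [DecidableEq V] {a b c : V} (hbc : b ≠ c) :
    s(b, c) ∈ triangleEdges ({a, b, c} : Finset V) :=
  ⟨b, by simp, c, by simp, hbc, rfl⟩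

lemma tri_decomp [DecidableEq V] {G : SimpleGraph V} {A B C : Set V}
    (hpart : IsTripartition G A B C) {t : Finset V} (ht : G.IsNClique 3 t) :
    ∃ a b c : V, a ∈ A ∧ b ∈ B ∧ c ∈ C ∧ G.Adj a b ∧ G.Adj a c ∧ G.Adj b c ∧
      t = {a, b, c} := by
  obtain ⟨hunion, hAB, hAC, hBC, hA, hB, hC⟩ := hpart
  obtain ⟨x, y, z, hxy, hxz, hyz, rfl⟩ := Finset.card_eq_three.mp ht.card_eq
  have hadjxy : G.Adj x y := ht.isClique (by simp) (by simp) hxy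
  have hadjxz : G.Adj x z := ht.isClique (by simp) (by simp) hxz
  have hadjyz : G.Adj y z := ht.isClique (by simp) (by simp) hyz
  have hpartof : ∀ v : V, v ∈ A ∨ v ∈ B ∨ v ∈ C := by
    intro v
    have : v ∈ A ∪ B ∪ C := by rw [hunion]; trivial
    simpa [Set.mem_union, or_assoc] using this
  rcases hpartof x with hx|hx|hx <;> rcases hpartof y with hy|hy|hy <;>
    rcases hpartof z with hz|hz|hz <;>
    first
      | exact absurd hadjxy (hA _ hx _ hy)
      | exact absurd hadjxy (hB _ hx _ hy)
      | exact absurd hadjxy (hC _ hx _ hy)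
      | exact absurd hadjxz (hA _ hx _ hz)
      | exact absurd hadjxz (hB _ hx _ hz)
      | exact absurd hadjxz (hC _ hx _ hz)
      | exact absurd hadjyz (hA _ hy _ hz)
      | exact absurd hadjyz (hB _ hy _ hz)
      | exact absurd hadjyz (hC _ hy _ hz)
      | exact ⟨x, y, z, hx, hy, hz, hadjxy, hadjxz, hadjyz, rfl⟩
      | exact ⟨x, z, y, hx, hz, hy, hadjxz, hadjxy, hadjyz.symm,
          by ext w; simp only [Finset.mem_insert, Finset.mem_singleton]; tauto⟩
      | exact ⟨y, x, z, hy, hx, hz, hadjxy.symm, hadjyz, hadjxz,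
          by ext w; simp only [Finset.mem_insert, Finset.mem_singleton]; tauto⟩
      | exact ⟨z, x, y, hz, hx, hy, hadjxz.symm, hadjyz.symm, hadjxy,
          by ext w; simp only [Finset.mem_insert, Finset.mem_singleton]; tauto⟩
      | exact ⟨y, z, x, hy, hz, hx, hadjyz, hadjxy.symm, hadjxz.symm,
          by ext w; simp only [Finset.mem_insert, Finset.mem_singleton]; tauto⟩
      | exact ⟨z, y, x, hz, hy, hx, hadjyz.symm, hadjxz.symm, hadjxy.symm,
          by ext w; simp only [Finset.mem_insert, Finset.mem_singleton]; tauto⟩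

/-- any packing is at most any transversal in size -/
lemma packing_le_transversal [Fintype V] {G : SimpleGraph V} {E' : Set (Sym2 V)}
    (hE' : IsTriTransversal G E') {P : Set (Finset V)} (hP : IsTriPacking G P) :
    P.ncard ≤ E'.ncard := by
  classical
  rcases P.eq_empty_or_nonempty with rfl | ⟨t₀, ht₀⟩
  · simp
  have hV : Nonempty V := by
    have h3 := (hP.1 t₀ ht₀).card_eq
    have : t₀.Nonempty := Finset.card_pos.mp (by omega)
    exact ⟨this.choose⟩
  have hpick : ∀ t ∈ P, ∃ e, e ∈ triangleEdges t ∧ e ∈ E' := by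
    intro t ht
    obtain ⟨e, he1, he2⟩ := hE'.2 t (hP.1 t ht)
    exact ⟨e, he1, he2⟩
  set f : Finset V → Sym2 V := fun t =>
    if h : ∃ e, e ∈ triangleEdges t ∧ e ∈ E' then h.choose else s(Classical.arbitrary V, Classical.arbitrary V)
    with hf
  have hfmem : ∀ t ∈ P, f t ∈ triangleEdges t ∧ f t ∈ E' := by
    intro t ht
    have h := hpick t ht
    simp only [hf, dif_pos h]
    exact h.choose_spec
  have hinj : Set.InjOn f P := by
    intro t ht t' ht' heq
    by_contra hne
    have hdisj := hP.2 ht ht' hne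
    exact Set.disjoint_left.mp hdisj (hfmem t ht).1 (heq ▸ (hfmem t' ht').1)
  calc P.ncard = (f '' P).ncard := (Set.ncard_image_of_injOn hinj).symm
    _ ≤ E'.ncard := Set.ncard_le_ncard (by rintro e ⟨t, ht, rfl⟩; exact (hfmem t ht).2)
        (Set.toFinite E')

lemma main_center [Fintype V] (G : SimpleGraph V) (A B C : Set V)
    (hpart : IsTripartition G A B C) (hAB : CompleteSide G A B)
    (hAC : CompleteSide G A C) :
    triTransversalNum G = triPackingNum G := by
  classical
  obtain ⟨hunion, hABd, hACd, hBCd, hAi, hBi, hCi⟩ :=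
    (⟨hpart.1, hpart.2.1, hpart.2.2.1, hpart.2.2.2.1, hpart.2.2.2.2.1,
      hpart.2.2.2.2.2.1, hpart.2.2.2.2.2.2⟩ :
      A ∪ B ∪ C = Set.univ ∧ Disjoint A B ∧ Disjoint A C ∧ Disjoint B C ∧
      (∀ u ∈ A, ∀ v ∈ A, ¬G.Adj u v) ∧ (∀ u ∈ B, ∀ v ∈ B, ¬G.Adj u v) ∧
      (∀ u ∈ C, ∀ v ∈ C, ¬G.Adj u v))
  set A' : Finset V := Finset.univ.filter (· ∈ A) with hA'
  set k : ℕ := A'.card with hk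
  set EH : Finset (V × V) :=
    Finset.univ.filter (fun p => p.1 ∈ B ∧ p.2 ∈ C ∧ G.Adj p.1 p.2) with hEH
  have hEHmem : ∀ p : V × V, p ∈ EH ↔ p.1 ∈ B ∧ p.2 ∈ C ∧ G.Adj p.1 p.2 := by
    intro p; simp [hEH]
  have hA'mem : ∀ v, v ∈ A' ↔ v ∈ A := by intro v; simp [hA']
  -- inequality helpers from disjointness
  have hneAB : ∀ {u v : V}, u ∈ A → v ∈ B → u ≠ v := by
    intro u v hu hv h; exact Set.disjoint_left.mp hABd (h ▸ hu) hv
  have hneAC : ∀ {u v : V}, u ∈ A → v ∈ C → u ≠ v := by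
    intro u v hu hv h; exact Set.disjoint_left.mp hACd (h ▸ hu) hv
  have hneBC : ∀ {u v : V}, u ∈ B → v ∈ C → u ≠ v := by
    intro u v hu hv h; exact Set.disjoint_left.mp hBCd (h ▸ hu) hv
  ---------------------------------------------------------------
  -- Transversal of size mu
  ---------------------------------------------------------------
  obtain ⟨X, Y, hmin⟩ := TriPack.exists_mu_min k EH
  set X' : Finset V := X.filter (· ∈ B) with hX'
  set Y' : Finset V := Y.filter (· ∈ C) with hY'
  have hX'B : ∀ v ∈ X', v ∈ B := by intro v hv; exact (Finset.mem_filter.mp hv).2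
  have hY'C : ∀ v ∈ Y', v ∈ C := by intro v hv; exact (Finset.mem_filter.mp hv).2
  have hmin' : TriPack.fval k EH X' Y' = TriPack.mu k EH := by
    refine le_antisymm ?_ (TriPack.mu_le_fval _ _ _ _)
    rw [← hmin]
    unfold TriPack.fval
    have hfilter : EH.filter (fun e => e.1 ∉ X' ∧ e.2 ∉ Y')
        = EH.filter (fun e => e.1 ∉ X ∧ e.2 ∉ Y) := by
      apply Finset.filter_congr
      intro e he
      obtain ⟨h1, h2, -⟩ := (hEHmem e).mp he
      simp only [hX', hY', Finset.mem_filter]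
      constructor
      · rintro ⟨ha, hb⟩
        exact ⟨fun h => ha ⟨h, h1⟩, fun h => hb ⟨h, h2⟩⟩
      · rintro ⟨ha, hb⟩
        exact ⟨fun h => ha h.1, fun h => hb h.1⟩
    rw [hfilter]
    have h1 : X'.card ≤ X.card := Finset.card_le_card (Finset.filter_subset _ _)
    have h2 : Y'.card ≤ Y.card := Finset.card_le_card (Finset.filter_subset _ _)
    have h3 : k * X'.card ≤ k * X.card := Nat.mul_le_mul_left _ h1
    have h4 : k * Y'.card ≤ k * Y.card := Nat.mul_le_mul_left _ h2
    omega
  set F1 : Finset (Sym2 V) := (A' ×ˢ (X' ∪ Y')).image (fun p => s(p.1, p.2)) with hF1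
  set F2 : Finset (Sym2 V) :=
    (EH.filter (fun e => e.1 ∉ X' ∧ e.2 ∉ Y')).image (fun e => s(e.1, e.2)) with hF2
  set Ftr : Finset (Sym2 V) := F1 ∪ F2 with hFtr
  have hFtrans : IsTriTransversal G (↑Ftr : Set (Sym2 V)) := by
    constructor
    · intro e he
      rw [Finset.mem_coe, hFtr, Finset.mem_union] at he
      rcases he with he | he
      · obtain ⟨p, hp, rfl⟩ := Finset.mem_image.mp he
        obtain ⟨hp1, hp2⟩ := Finset.mem_product.mp hp
        rw [SimpleGraph.mem_edgeSet]
        rcases Finset.mem_union.mp hp2 with h | h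
        · exact hAB p.1 ((hA'mem p.1).mp hp1) p.2 (hX'B _ h)
        · exact hAC p.1 ((hA'mem p.1).mp hp1) p.2 (hY'C _ h)
      · obtain ⟨p, hp, rfl⟩ := Finset.mem_image.mp he
        have := (hEHmem p).mp (Finset.mem_filter.mp hp).1
        rw [SimpleGraph.mem_edgeSet]
        exact this.2.2
    · intro t ht
      obtain ⟨a, b, c, ha, hb, hc, hab, hac, hbc, rfl⟩ :=
        tri_decomp ⟨hunion, hABd, hACd, hBCd, hAi, hBi, hCi⟩ ht
      have hab' : a ≠ b := hneAB ha hb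
      have hac' : a ≠ c := hneAC ha hc
      have hbc' : b ≠ c := hneBC hb hc
      by_cases hbX : b ∈ X'
      · refine ⟨s(a, b), triangleEdges_mem₁ hab', ?_⟩
        rw [Finset.mem_coe, hFtr, Finset.mem_union]
        left
        exact Finset.mem_image.mpr ⟨(a, b), Finset.mem_product.mpr
          ⟨(hA'mem a).mpr ha, Finset.mem_union_left _ hbX⟩, rfl⟩
      by_cases hcY : c ∈ Y'
      · refine ⟨s(a, c), triangleEdges_mem₂ hac', ?_⟩
        rw [Finset.mem_coe, hFtr, Finset.mem_union]
        left
        exact Finset.mem_image.mpr ⟨(a, c), Finset.mem_product.mpr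
          ⟨(hA'mem a).mpr ha, Finset.mem_union_right _ hcY⟩, rfl⟩
      · refine ⟨s(b, c), triangleEdges_mem₃ hbc', ?_⟩
        rw [Finset.mem_coe, hFtr, Finset.mem_union]
        right
        refine Finset.mem_image.mpr ⟨(b, c), Finset.mem_filter.mpr ⟨?_, hbX, hcY⟩, rfl⟩
        exact (hEHmem (b, c)).mpr ⟨hb, hc, hbc⟩
  have hτle : triTransversalNum G ≤ TriPack.mu k EH := by
    have hcard : Ftr.card ≤ TriPack.mu k EH := by
      have h1 : F1.card ≤ k * X'.card + k * Y'.card := by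
        calc F1.card ≤ (A' ×ˢ (X' ∪ Y')).card := Finset.card_image_le
          _ = k * (X' ∪ Y').card := by rw [Finset.card_product]
          _ ≤ k * (X'.card + Y'.card) :=
              Nat.mul_le_mul_left _ (Finset.card_union_le _ _)
          _ = k * X'.card + k * Y'.card := Nat.mul_add _ _ _
      have h2 : F2.card ≤ (EH.filter (fun e => e.1 ∉ X' ∧ e.2 ∉ Y')).card :=
        Finset.card_image_le
      have h3 := Finset.card_union_le F1 F2
      have h5 : Ftr.card = (F1 ∪ F2).card := by rw [hFtr]
      have := hmin'
      unfold TriPack.fval at this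
      omega
    refine le_trans (Nat.sInf_le ?_) hcard
    exact ⟨↑Ftr, hFtrans, Set.ncard_coe_finset _⟩
  ---------------------------------------------------------------
  -- Packing of size mu
  ---------------------------------------------------------------
  obtain ⟨U, hUE, hUb, hUc, hUcard⟩ := TriPack.exists_deg_subgraph k EH
  obtain ⟨col, hcolv, hcolp⟩ := TriPack.exists_coloring k U hUb hUc
  set av : V × V → V := fun e =>
    if h : col e < k then (A'.equivFin.symm ⟨col e, h⟩ : V) else e.1 with hav
  have havA : ∀ e ∈ U, av e ∈ A := by
    intro e he
    have h1 : col e < k := hcolv e he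
    simp only [hav, dif_pos h1]
    exact (hA'mem _).mp (A'.equivFin.symm ⟨col e, h1⟩).2
  have havinj : ∀ e ∈ U, ∀ e' ∈ U, av e = av e' → col e = col e' := by
    intro e he e' he' h
    have h1 : col e < k := hcolv e he
    have h2 : col e' < k := hcolv e' he'
    simp only [hav, dif_pos h1, dif_pos h2] at h
    have h3 := A'.equivFin.symm.injective (Subtype.coe_injective h)
    exact congrArg Fin.val h3
  have hUmem : ∀ e ∈ U, e.1 ∈ B ∧ e.2 ∈ C ∧ G.Adj e.1 e.2 :=
    fun e he => (hEHmem e).mp (hUE he)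
  set tFun : V × V → Finset V := fun e => {av e, e.1, e.2} with htFun
  have htri : ∀ e ∈ U, G.IsNClique 3 (tFun e) := by
    intro e he
    obtain ⟨h1, h2, h3⟩ := hUmem e he
    have ha := havA e he
    exact SimpleGraph.is3Clique_triple_iff.mpr
      ⟨hAB _ ha _ h1, hAC _ ha _ h2, h3⟩
  have hedges : ∀ e ∈ U, ∀ x ∈ triangleEdges (tFun e),
      x = s(av e, e.1) ∨ x = s(av e, e.2) ∨ x = s(e.1, e.2) :=
    fun e _ x hx => triangleEdges_sub hx
  have hdisj : ∀ e ∈ U, ∀ e' ∈ U, e ≠ e' →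
      Disjoint (triangleEdges (tFun e)) (triangleEdges (tFun e')) := by
    intro e he e' he' hne
    obtain ⟨hb, hc, -⟩ := hUmem e he
    obtain ⟨hb', hc', -⟩ := hUmem e' he'
    have ha := havA e he
    have ha' := havA e' he'
    rw [Set.disjoint_left]
    intro x hx hx'
    have h1 := hedges e he x hx
    have h2 := hedges e' he' x hx'
    have hcolne : (e.1 = e'.1 ∨ e.2 = e'.2) → col e ≠ col e' :=
      fun hadj => hcolp e he e' he' hne hadj
    rcases h1 with h1 | h1 | h1 <;> rcases h2 with h2 | h2 | h2 <;>
      rcases Sym2.eq_iff.mp (h1.symm.trans h2) with ⟨hu, hv⟩ | ⟨hu, hv⟩ <;>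
      first
        | exact hcolne (Or.inl hv) (havinj e he e' he' hu)
        | exact hcolne (Or.inr hv) (havinj e he e' he' hu)
        | exact hneAB ha hb' hu
        | exact hneAB ha hb' hv
        | exact hneAB ha' hb hu.symm
        | exact hneAB ha' hb hv.symm
        | exact hneAC ha hc' hu
        | exact hneAC ha hc' hv
        | exact hneAC ha' hc hu.symm
        | exact hneAC ha' hc hv.symm
        | exact hneBC hb hc' hu
        | exact hneBC hb hc' hv
        | exact hneBC hb' hc hu.symm
        | exact hneBC hb' hc hv.symm
        | exact hne (Prod.ext_iff.mpr ⟨hu, hv⟩)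
  -- injectivity of tFun on U
  have htinj : Set.InjOn tFun ↑U := by
    intro e he e' he' heq
    have he1 : e.1 ∈ tFun e' := by
      rw [← heq]; simp [htFun]
    have he2 : e.2 ∈ tFun e' := by
      rw [← heq]; simp [htFun]
    obtain ⟨hb, hc, -⟩ := hUmem e (Finset.mem_coe.mp he)
    obtain ⟨hb', hc', -⟩ := hUmem e' (Finset.mem_coe.mp he')
    have ha' := havA e' (Finset.mem_coe.mp he')
    simp only [htFun, Finset.mem_insert, Finset.mem_singleton] at he1 he2
    have h1 : e.1 = e'.1 := by
      rcases he1 with h | h | h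
      · exact absurd h.symm (hneAB ha' hb)
      · exact h
      · exact absurd h (hneBC hb hc')
    have h2 : e.2 = e'.2 := by
      rcases he2 with h | h | h
      · exact absurd h.symm (hneAC ha' hc)
      · exact absurd h.symm (hneBC hb' hc)
      · exact h
    exact Prod.ext_iff.mpr ⟨h1, h2⟩
  set PF : Finset (Finset V) := U.image tFun with hPF
  have hPpack : IsTriPacking G (↑PF : Set (Finset V)) := by
    constructor
    · intro t ht
      obtain ⟨e, he, rfl⟩ := Finset.mem_image.mp (Finset.mem_coe.mp ht)
      exact htri e he
    · intro t ht t' ht' hne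
      obtain ⟨e, he, rfl⟩ := Finset.mem_image.mp (Finset.mem_coe.mp ht)
      obtain ⟨e', he', rfl⟩ := Finset.mem_image.mp (Finset.mem_coe.mp ht')
      exact hdisj e he e' he' (fun h => hne (by rw [h]))
  have hPcard : (↑PF : Set (Finset V)).ncard = U.card := by
    rw [Set.ncard_coe_finset, hPF, Finset.card_image_of_injOn htinj]
  -- nu is at least mu
  have hbdd : BddAbove {n | ∃ P : Set (Finset V), IsTriPacking G P ∧ P.ncard = n} := by
    refine ⟨Nat.card (Finset V), ?_⟩
    rintro n ⟨P, -, rfl⟩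
    have := Set.ncard_le_ncard (Set.subset_univ P) Set.finite_univ
    rwa [Set.ncard_univ] at this
  have hνge : TriPack.mu k EH ≤ triPackingNum G := by
    refine le_trans hUcard ?_
    refine le_trans (le_of_eq hPcard.symm) ?_
    exact le_csSup hbdd ⟨↑PF, hPpack, rfl⟩
  ---------------------------------------------------------------
  -- nu ≤ tau and conclusion
  ---------------------------------------------------------------
  have hτmem := Nat.sInf_mem
    (⟨Ftr.card, ↑Ftr, hFtrans, Set.ncard_coe_finset _⟩ :
      Set.Nonempty {n | ∃ E' : Set (Sym2 V), IsTriTransversal G E' ∧ E'.ncard = n})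
  obtain ⟨E₀, hE₀, hE₀card⟩ := hτmem
  have hνleτ : triPackingNum G ≤ triTransversalNum G := by
    refine csSup_le ⟨0, ∅, ⟨fun t ht => absurd ht (Set.notMem_empty t),
      Set.pairwise_empty _⟩, by simp⟩ ?_
    rintro n ⟨P, hPp, rfl⟩
    exact le_trans (packing_le_transversal hE₀ hPp) (le_of_eq hE₀card)
  exact le_antisymm (le_trans hτle hνge) hνleτ

end Glue

/-- **Theorem 1.** If `G` is a bilaterally-complete tripartite graph (a tripartite
graph at least two of whose sides are complete bipartite), then `τ△(G) = ν△(G)`. -/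
theorem tau_eq_nu_of_bilaterallyComplete [Fintype V] (G : SimpleGraph V)
    (A B C : Set V) (hpart : IsTripartition G A B C)
    (hbc : (CompleteSide G A B ∧ CompleteSide G A C) ∨
           (CompleteSide G A B ∧ CompleteSide G B C) ∨
           (CompleteSide G A C ∧ CompleteSide G B C)) :
    triTransversalNum G = triPackingNum G := by
  obtain ⟨hunion, hABd, hACd, hBCd, hAi, hBi, hCi⟩ := hpart
  rcases hbc with ⟨h1, h2⟩ | ⟨h1, h2⟩ | ⟨h1, h2⟩
  · exact main_center G A B C ⟨hunion, hABd, hACd, hBCd, hAi, hBi, hCi⟩ h1 h2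
  · -- sides AB and BC complete: B is the centre
    refine main_center G B A C ⟨?_, hABd.symm, hBCd, hACd, hBi, hAi, hCi⟩
      (fun x hx y hy => (h1 y hy x hx).symm) h2
    rw [← hunion]; ext v; simp [Set.mem_union]; tauto
  · -- sides AC and BC complete: C is the centre
    refine main_center G C A B ⟨?_, hACd.symm, hBCd.symm, hABd, hCi, hAi, hBi⟩
      (fun x hx y hy => (h1 y hy x hx).symm)
      (fun x hx y hy => (h2 y hy x hx).symm)
    rw [← hunion]; ext v; simp [Set.mem_union]; tauto
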